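/- For every integer n ≥ 0 there exists an involution Ψ of the set H_n such that: Ψ(μ)=μ if and only if μ∈F_n; for every μ∉F_n, ρ(Ψ(μ)) equals y²·ρ(μ) or y^{−2}·ρ(μ); and for every μ∈H_n, the exponent of t in the monomial ρ(Ψ(μ)) equals the exponent of t in ρ(μ). -/

import Mathlib

open Finset

/-- A step of a bicolored Motzkin path: up, down, straight level, wavy level. -/
inductive MStep where
  | U : MStep
  | D : MStep
  | L : MStep
  | W : MStep
deriving DecidableEq

/-- A weighted bicolored Motzkin path of length `n`: a sequence of steps together
with, for each step, the triple `(a, b, c)` of exponents of its monomial weight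
`y^a t^b q^c`. -/
structure WPath (n : ℕ) where
  step : Fin n → MStep
  wt : Fin n → ℕ × ℕ × ℕ

/-- The height increment of a step. -/
def dh : MStep → ℤ
  | MStep.U => 1
  | MStep.D => -1
  | MStep.L => 0
  | MStep.W => 0

/-- The height (of the starting point) of the `j`-th step; `ht μ n` is the final
height. -/
def ht {n : ℕ} (μ : WPath n) (j : ℕ) : ℤ :=
  ∑ k ∈ Finset.range j, if h : k < n then dh (μ.step ⟨k, h⟩) else 0

/-- The underlying path is a Motzkin path: stays weakly above the `x`-axis and
ends on it. -/
def IsMotzkin {n : ℕ} (μ : WPath n) : Prop :=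
  (∀ j ≤ n, 0 ≤ ht μ j) ∧ ht μ n = 0

/-- `y`, as the variable `X 0` of `ℤ[y,t,q]`. -/
noncomputable def yv : MvPolynomial (Fin 3) ℤ := MvPolynomial.X 0

/-- `t`, as the variable `X 1` of `ℤ[y,t,q]`. -/
noncomputable def tv : MvPolynomial (Fin 3) ℤ := MvPolynomial.X 1

/-- `q`, as the variable `X 2` of `ℤ[y,t,q]`. -/
noncomputable def qv : MvPolynomial (Fin 3) ℤ := MvPolynomial.X 2

/-- The weight `ρ(μ) ∈ ℤ[y,t,q]`: the product of the step weights `y^a t^b q^c`. -/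
noncomputable def rho {n : ℕ} (μ : WPath n) : MvPolynomial (Fin 3) ℤ :=
  ∏ j : Fin n, yv ^ (μ.wt j).1 * tv ^ (μ.wt j).2.1 * qv ^ (μ.wt j).2.2

/-- The exponent of `t` in the monomial `ρ(μ)`. -/
def tExp {n : ℕ} (μ : WPath n) : ℕ := ∑ j : Fin n, (μ.wt j).2.1

/-- The weight `w` is `y² q^c` with `lo ≤ c ≤ hi`. -/
def wY2 (w : ℕ × ℕ × ℕ) (lo hi : ℤ) : Prop :=
  w.1 = 2 ∧ w.2.1 = 0 ∧ lo ≤ (w.2.2 : ℤ) ∧ (w.2.2 : ℤ) ≤ hi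

/-- The weight `w` is `y t q^c` with `lo ≤ c ≤ hi`. -/
def wYT (w : ℕ × ℕ × ℕ) (lo hi : ℤ) : Prop :=
  w.1 = 1 ∧ w.2.1 = 1 ∧ lo ≤ (w.2.2 : ℤ) ∧ (w.2.2 : ℤ) ≤ hi

/-- The weight `w` is `q^c` with `lo ≤ c ≤ hi`. -/
def wQ (w : ℕ × ℕ × ℕ) (lo hi : ℤ) : Prop :=
  w.1 = 0 ∧ w.2.1 = 0 ∧ lo ≤ (w.2.2 : ℤ) ∧ (w.2.2 : ℤ) ≤ hi

/-- `μ ∈ M_n`: no wavy level step on the `x`-axis, and at each step of height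
`h`: up and straight level steps carry `y²q^c` (`c ≤ h`) or `ytq^c`
(`h ≤ c ≤ 2h`); wavy level steps (at height `h ≥ 1`) carry `q^c` (`c ≤ h-1`) or
`ytq^c` (`h ≤ c ≤ 2h-1`); down steps at height `h+1` carry `q^c` (`c ≤ h`) or
`ytq^c` (`h+1 ≤ c ≤ 2h+1`). -/
def Mcond {n : ℕ} (μ : WPath n) : Prop :=
  IsMotzkin μ ∧ ∀ j : Fin n,
    (μ.step j = MStep.U →
      wY2 (μ.wt j) 0 (ht μ j) ∨ wYT (μ.wt j) (ht μ j) (2 * ht μ j)) ∧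
    (μ.step j = MStep.L →
      wY2 (μ.wt j) 0 (ht μ j) ∨ wYT (μ.wt j) (ht μ j) (2 * ht μ j)) ∧
    (μ.step j = MStep.W →
      1 ≤ ht μ j ∧
        (wQ (μ.wt j) 0 (ht μ j - 1) ∨ wYT (μ.wt j) (ht μ j) (2 * ht μ j - 1))) ∧
    (μ.step j = MStep.D →
      wQ (μ.wt j) 0 (ht μ j - 1) ∨ wYT (μ.wt j) (ht μ j) (2 * ht μ j - 1))

/-- `μ ∈ H_n`: at each step of height `h`: up steps carry `y²q^c` (`c ≤ h+1`) or
`ytq^c` (`h+1 ≤ c ≤ 2h+2`); straight level steps carry `q^c` (`c ≤ h`) or `ytq^c`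
(`h+1 ≤ c ≤ 2h+1`); wavy level steps carry `y²q^c` (`c ≤ h`) or `ytq^c`
(`h ≤ c ≤ 2h`); down steps at height `h+1` carry `q^c` (`c ≤ h`) or `ytq^c`
(`h+1 ≤ c ≤ 2h+1`). -/
def Hcond {n : ℕ} (μ : WPath n) : Prop :=
  IsMotzkin μ ∧ ∀ j : Fin n,
    (μ.step j = MStep.U →
      wY2 (μ.wt j) 0 (ht μ j + 1) ∨ wYT (μ.wt j) (ht μ j + 1) (2 * ht μ j + 2)) ∧
    (μ.step j = MStep.L →
      wQ (μ.wt j) 0 (ht μ j) ∨ wYT (μ.wt j) (ht μ j + 1) (2 * ht μ j + 1)) ∧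
    (μ.step j = MStep.W →
      wY2 (μ.wt j) 0 (ht μ j) ∨ wYT (μ.wt j) (ht μ j) (2 * ht μ j)) ∧
    (μ.step j = MStep.D →
      wQ (μ.wt j) 0 (ht μ j - 1) ∨ wYT (μ.wt j) (ht μ j) (2 * ht μ j - 1))

/-- The up step `i` and the down step `j` form a matching pair: they face each
other, i.e. the horizontal segment between their midpoints stays under the path. -/
def Matching {n : ℕ} (μ : WPath n) (i j : Fin n) : Prop :=
  (i : ℕ) < (j : ℕ) ∧ μ.step i = MStep.U ∧ μ.step j = MStep.D ∧
    ht μ j = ht μ i + 1 ∧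
    ∀ k : ℕ, (i : ℕ) < k → k < (j : ℕ) → ht μ i + 1 ≤ ht μ k

/-- The defining restrictions of `F_n`: every matching pair at height `h` has
weights `(y²q^a, q^b)` with `a ≤ h+1`, `b ≤ h`, or `(ytq^{h+1+a}, ytq^{h+1+b})`
with `a ≤ h+1`, `b ≤ h`; every straight level step at height `h` has weight
`ytq^c` with `h+1 ≤ c ≤ 2h+1`; every wavy level step at height `h` has weight
`ytq^c` with `h ≤ c ≤ 2h`. -/
def FextraCond {n : ℕ} (μ : WPath n) : Prop :=
  (∀ i j : Fin n, Matching μ i j →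
    (wY2 (μ.wt i) 0 (ht μ i + 1) ∧ wQ (μ.wt j) 0 (ht μ i)) ∨
    (wYT (μ.wt i) (ht μ i + 1) (2 * ht μ i + 2) ∧
      wYT (μ.wt j) (ht μ i + 1) (2 * ht μ i + 1))) ∧
  (∀ j : Fin n, μ.step j = MStep.L →
    wYT (μ.wt j) (ht μ j + 1) (2 * ht μ j + 1)) ∧
  (∀ j : Fin n, μ.step j = MStep.W →
    wYT (μ.wt j) (ht μ j) (2 * ht μ j))

/-! ### Auxiliary development for the involution -/

section Aux

variable {n : ℕ}

lemma ht_succ (μ : WPath n) (k : ℕ) :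
    ht μ (k + 1) = ht μ k + (if h : k < n then dh (μ.step ⟨k, h⟩) else 0) := by
  simp [ht, Finset.sum_range_succ]

lemma ht_congr {μ' μ : WPath n} (h : ∀ k : Fin n, dh (μ'.step k) = dh (μ.step k))
    (p : ℕ) : ht μ' p = ht μ p := by
  unfold ht
  refine Finset.sum_congr rfl fun k _ => ?_
  by_cases hk : k < n
  · simp [hk, h ⟨k, hk⟩]
  · simp [hk]

lemma Matching_congr {μ' μ : WPath n}
    (hstep : ∀ k : Fin n, (μ'.step k = MStep.U ↔ μ.step k = MStep.U) ∧
      (μ'.step k = MStep.D ↔ μ.step k = MStep.D))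
    (hht : ∀ p : ℕ, ht μ' p = ht μ p) (i j : Fin n) :
    Matching μ' i j ↔ Matching μ i j := by
  unfold Matching
  simp only [hht, (hstep i).1, (hstep j).2]

lemma matching_unique_right {μ : WPath n} {i m m' : Fin n}
    (h1 : Matching μ i m) (h2 : Matching μ i m') : m = m' := by
  obtain ⟨hi1, hU1, hD1, hh1, hb1⟩ := h1
  obtain ⟨hi2, hU2, hD2, hh2, hb2⟩ := h2
  -- key: ht μ (m+1) = ht μ m - 1
  have key : ∀ {a b : Fin n}, Matching μ i a → Matching μ i b → (a : ℕ) < (b : ℕ) → False := by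
    intro a b ha hb hab
    obtain ⟨hia, hUa, hDa, hha, hba⟩ := ha
    obtain ⟨hib, hUb, hDb, hhb, hbb⟩ := hb
    have hstep : ht μ ((a : ℕ) + 1) = ht μ a - 1 := by
      rw [ht_succ]
      have : (a : ℕ) < n := a.isLt
      simp [this, hDa, dh]; ring
    have h1 : ht μ ((a : ℕ) + 1) = ht μ i := by rw [hstep, hha]; ring
    rcases Nat.lt_or_ge ((a : ℕ) + 1) (b : ℕ) with hc | hc
    · have := hbb ((a : ℕ) + 1) (by omega) hc
      omega
    · have : (a : ℕ) + 1 = (b : ℕ) := by omega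
      rw [this] at h1
      omega
  rcases Nat.lt_trichotomy (m : ℕ) (m' : ℕ) with h | h | h
  · exact absurd (key ⟨hi1, hU1, hD1, hh1, hb1⟩ ⟨hi2, hU2, hD2, hh2, hb2⟩ h) (fun x => x)
  · exact Fin.ext h
  · exact absurd (key ⟨hi2, hU2, hD2, hh2, hb2⟩ ⟨hi1, hU1, hD1, hh1, hb1⟩ h) (fun x => x)

lemma matching_unique_left {μ : WPath n} {i i' m : Fin n}
    (h1 : Matching μ i m) (h2 : Matching μ i' m) : i = i' := by
  have key : ∀ {a b : Fin n}, Matching μ a m → Matching μ b m → (a : ℕ) < (b : ℕ) → False := by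
    intro a b ha hb hab
    obtain ⟨hia, hUa, hDa, hha, hba⟩ := ha
    obtain ⟨hib, hUb, hDb, hhb, hbb⟩ := hb
    have := hba (b : ℕ) hab hib
    omega
  rcases Nat.lt_trichotomy (i : ℕ) (i' : ℕ) with h | h | h
  · exact absurd (key h1 h2 h) (fun x => x)
  · exact Fin.ext h
  · exact absurd (key h2 h1 h) (fun x => x)

open Classical in
/-- The set of positions where `μ` violates the `F_n` conditions. -/
noncomputable def Vset (μ : WPath n) : Finset (Fin n) :=
  Finset.univ.filter (fun j =>
    (μ.step j = MStep.L ∧ (μ.wt j).1 = 0) ∨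
    (μ.step j = MStep.W ∧ (μ.wt j).1 = 2) ∨
    (μ.step j = MStep.U ∧ ∃ m, Matching μ j m ∧
      (((μ.wt j).1 = 2 ∧ (μ.wt m).1 = 1) ∨ ((μ.wt j).1 = 1 ∧ (μ.wt m).1 = 0))))

lemma mem_Vset {μ : WPath n} {j : Fin n} :
    j ∈ Vset μ ↔
    (μ.step j = MStep.L ∧ (μ.wt j).1 = 0) ∨
    (μ.step j = MStep.W ∧ (μ.wt j).1 = 2) ∨
    (μ.step j = MStep.U ∧ ∃ m, Matching μ j m ∧
      (((μ.wt j).1 = 2 ∧ (μ.wt m).1 = 1) ∨ ((μ.wt j).1 = 1 ∧ (μ.wt m).1 = 0))) := by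
  simp [Vset]

open Classical in
/-- The matching partner of an up step (or `j` itself if there is none). -/
noncomputable def partner (μ : WPath n) (j : Fin n) : Fin n :=
  if h : ∃ m, Matching μ j m then h.choose else j

lemma partner_matching {μ : WPath n} {j m : Fin n} (h : Matching μ j m) :
    partner μ j = m ∧ Matching μ j (partner μ j) := by
  have he : ∃ m, Matching μ j m := ⟨m, h⟩
  have := he.choose_spec
  rw [partner, dif_pos he]
  exact ⟨matching_unique_right this h, this⟩

lemma partner_of_not_U {μ : WPath n} {j : Fin n} (h : μ.step j ≠ MStep.U) :
    partner μ j = j := by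
  rw [partner, dif_neg]
  rintro ⟨m, hm⟩
  exact h hm.2.1

/-- Toggling the violation at position `j`. -/
noncomputable def toggle (μ : WPath n) (j : Fin n) : WPath n :=
  if μ.step j = MStep.L then
    ⟨Function.update μ.step j MStep.W, Function.update μ.wt j (2, (μ.wt j).2)⟩
  else if μ.step j = MStep.W then
    ⟨Function.update μ.step j MStep.L, Function.update μ.wt j (0, (μ.wt j).2)⟩
  else if μ.step j = MStep.U then
    ⟨μ.step, Function.update (Function.update μ.wt j
        (if (μ.wt j).1 = 2 then (1, 1, (ht μ j).toNat + 1 + (μ.wt j).2.2)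
         else (2, 0, (μ.wt j).2.2 - ((ht μ j).toNat + 1)))) (partner μ j)
        (if (μ.wt (partner μ j)).1 = 1 then
            (0, 0, (μ.wt (partner μ j)).2.2 - ((ht μ j).toNat + 1))
         else (1, 1, (ht μ j).toNat + 1 + (μ.wt (partner μ j)).2.2))⟩
  else μ

lemma toggle_step_ne {μ : WPath n} {j k : Fin n} (h : k ≠ j) :
    (toggle μ j).step k = μ.step k := by
  unfold toggle
  split_ifs <;> simp [Function.update_of_ne h]

lemma toggle_step_U {μ : WPath n} (j : Fin n) (k : Fin n) :
    ((toggle μ j).step k = MStep.U ↔ μ.step k = MStep.U) ∧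
    ((toggle μ j).step k = MStep.D ↔ μ.step k = MStep.D) := by
  by_cases hk : k = j
  · subst hk
    unfold toggle
    split_ifs with h1 h2 h3 <;>
      simp_all [Function.update_self]
  · rw [toggle_step_ne hk]; exact ⟨Iff.rfl, Iff.rfl⟩

lemma toggle_dh {μ : WPath n} (j : Fin n) (k : Fin n) :
    dh ((toggle μ j).step k) = dh (μ.step k) := by
  by_cases hk : k = j
  · subst hk
    unfold toggle
    split_ifs with h1 h2 h3 <;> simp_all [Function.update_self, dh]
  · rw [toggle_step_ne hk]

lemma toggle_ht {μ : WPath n} (j : Fin n) (p : ℕ) :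
    ht (toggle μ j) p = ht μ p := ht_congr (toggle_dh j) p

lemma toggle_matching {μ : WPath n} (j : Fin n) (i m : Fin n) :
    Matching (toggle μ j) i m ↔ Matching μ i m :=
  Matching_congr (toggle_step_U j) (toggle_ht j) i m

lemma toggle_wt_ne {μ : WPath n} {j k : Fin n} (h1 : k ≠ j) (h2 : k ≠ partner μ j) :
    (toggle μ j).wt k = μ.wt k := by
  unfold toggle
  split_ifs <;> simp [Function.update_of_ne h1, Function.update_of_ne h2]

lemma toggle_of_L {μ : WPath n} {j : Fin n} (hL : μ.step j = MStep.L) :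
    (toggle μ j).step = Function.update μ.step j MStep.W ∧
    (toggle μ j).wt = Function.update μ.wt j (2, (μ.wt j).2) := by
  unfold toggle; rw [if_pos hL]; exact ⟨rfl, rfl⟩

lemma toggle_of_W {μ : WPath n} {j : Fin n} (hW : μ.step j = MStep.W) :
    (toggle μ j).step = Function.update μ.step j MStep.L ∧
    (toggle μ j).wt = Function.update μ.wt j (0, (μ.wt j).2) := by
  unfold toggle
  rw [if_neg (by rw [hW]; intro h; exact absurd h (by decide)), if_pos hW]
  exact ⟨rfl, rfl⟩

lemma toggle_of_U {μ : WPath n} {j : Fin n} (hU : μ.step j = MStep.U) :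
    (toggle μ j).step = μ.step ∧
    (toggle μ j).wt = Function.update (Function.update μ.wt j
        (if (μ.wt j).1 = 2 then (1, 1, (ht μ j).toNat + 1 + (μ.wt j).2.2)
         else (2, 0, (μ.wt j).2.2 - ((ht μ j).toNat + 1)))) (partner μ j)
        (if (μ.wt (partner μ j)).1 = 1 then
            (0, 0, (μ.wt (partner μ j)).2.2 - ((ht μ j).toNat + 1))
         else (1, 1, (ht μ j).toNat + 1 + (μ.wt (partner μ j)).2.2)) := by
  unfold toggle
  rw [if_neg (by rw [hU]; intro h; exact absurd h (by decide)),
    if_neg (by rw [hU]; intro h; exact absurd h (by decide)), if_pos hU]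
  exact ⟨rfl, rfl⟩

lemma mem_Vset_of_congr {μ ν : WPath n} {k : Fin n}
    (hht : ∀ p, ht ν p = ht μ p)
    (hUD : ∀ i, (ν.step i = MStep.U ↔ μ.step i = MStep.U) ∧
      (ν.step i = MStep.D ↔ μ.step i = MStep.D))
    (hstep : ν.step k = μ.step k) (hwt : ν.wt k = μ.wt k)
    (hwtm : ∀ m, Matching μ k m → ν.wt m = μ.wt m) :
    (k ∈ Vset ν ↔ k ∈ Vset μ) := by
  rw [mem_Vset, mem_Vset, hstep, hwt]
  have hM : ∀ m, Matching ν k m ↔ Matching μ k m := Matching_congr hUD hht k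
  constructor
  · rintro (h | h | ⟨hU, m, hm, hmix⟩)
    · exact Or.inl h
    · exact Or.inr (Or.inl h)
    · exact Or.inr (Or.inr ⟨hU, m, (hM m).1 hm,
        by rwa [hwtm m ((hM m).1 hm)] at hmix⟩)
  · rintro (h | h | ⟨hU, m, hm, hmix⟩)
    · exact Or.inl h
    · exact Or.inr (Or.inl h)
    · exact Or.inr (Or.inr ⟨hU, m, (hM m).2 hm,
        by rwa [hwtm m hm]⟩)

lemma not_mem_Vset_of_D {μ : WPath n} {k : Fin n} (h : μ.step k = MStep.D) :
    k ∉ Vset μ := by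
  rw [mem_Vset]
  rintro (⟨h', _⟩ | ⟨h', _⟩ | ⟨h', _⟩) <;> rw [h] at h' <;> exact absurd h' (by decide)

lemma Vset_toggle {μ : WPath n} {j : Fin n} (hj : j ∈ Vset μ) :
    Vset (toggle μ j) = Vset μ := by
  have hht := toggle_ht (μ := μ) j
  have hUD := toggle_step_U (μ := μ) j
  set ν := toggle μ j with hν
  ext k
  rcases mem_Vset.mp hj with ⟨hL, hw⟩ | ⟨hW, hw⟩ | ⟨hU, m0, hm0, hmix0⟩
  · -- straight level step violation
    obtain ⟨hs, hwts⟩ := toggle_of_L hL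
    by_cases hk : k = j
    · subst hk
      constructor <;> intro _
      · exact hj
      · rw [mem_Vset]
        refine Or.inr (Or.inl ⟨?_, ?_⟩)
        · rw [hs]; simp
        · rw [hwts]; simp
    · refine mem_Vset_of_congr hht hUD ?_ ?_ ?_
      · rw [hs, Function.update_of_ne hk]
      · rw [hwts, Function.update_of_ne hk]
      · intro m hm
        have hmj : m ≠ j := by
          intro h
          have := hm.2.2.1
          rw [h, hL] at this
          exact absurd this (by decide)
        rw [hwts, Function.update_of_ne hmj]
  · -- wavy level step violation
    obtain ⟨hs, hwts⟩ := toggle_of_W hW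
    by_cases hk : k = j
    · subst hk
      constructor <;> intro _
      · exact hj
      · rw [mem_Vset]
        refine Or.inl ⟨?_, ?_⟩
        · rw [hs]; simp
        · rw [hwts]; simp
    · refine mem_Vset_of_congr hht hUD ?_ ?_ ?_
      · rw [hs, Function.update_of_ne hk]
      · rw [hwts, Function.update_of_ne hk]
      · intro m hm
        have hmj : m ≠ j := by
          intro h
          have := hm.2.2.1
          rw [h, hW] at this
          exact absurd this (by decide)
        rw [hwts, Function.update_of_ne hmj]
  · -- matching pair violation
    obtain ⟨hpm, hmm⟩ := partner_matching hm0
    set m := partner μ j with hmdef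
    have hmix : ((μ.wt j).1 = 2 ∧ (μ.wt m).1 = 1) ∨
        ((μ.wt j).1 = 1 ∧ (μ.wt m).1 = 0) := by rw [hpm]; exact hmix0
    obtain ⟨hs, hwts⟩ := toggle_of_U hU
    have hjm : j ≠ m := by
      intro h
      have := hmm.1
      rw [← h] at this
      exact lt_irrefl _ this
    have hwj : ν.wt j =
        (if (μ.wt j).1 = 2 then (1, 1, (ht μ j).toNat + 1 + (μ.wt j).2.2)
         else (2, 0, (μ.wt j).2.2 - ((ht μ j).toNat + 1))) := by
      rw [hwts, Function.update_of_ne hjm, Function.update_self]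
    have hwm : ν.wt m =
        (if (μ.wt m).1 = 1 then (0, 0, (μ.wt m).2.2 - ((ht μ j).toNat + 1))
         else (1, 1, (ht μ j).toNat + 1 + (μ.wt m).2.2)) := by
      rw [hwts, Function.update_self]
    by_cases hk : k = j
    · subst hk
      constructor <;> intro _
      · exact hj
      · rw [mem_Vset]
        refine Or.inr (Or.inr ⟨by rw [hs]; exact hU, m,
          (toggle_matching k k m).2 hmm, ?_⟩)
        rcases hmix with ⟨h2, h1⟩ | ⟨h1, h0⟩
        · right
          constructor
          · rw [hwj, if_pos h2]
          · rw [hwm, if_pos h1]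
        · left
          constructor
          · rw [hwj, if_neg (by omega)]
          · rw [hwm, if_neg (by omega)]
    · by_cases hkm : k = m
      · subst hkm
        have hD : μ.step m = MStep.D := hmm.2.2.1
        have hD' : ν.step m = MStep.D := by rw [hs]; exact hD
        constructor <;> intro h
        · exact absurd h (not_mem_Vset_of_D hD')
        · exact absurd h (not_mem_Vset_of_D hD)
      · refine mem_Vset_of_congr hht hUD (by rw [hs]) ?_ ?_
        · rw [hwts, Function.update_of_ne hkm, Function.update_of_ne hk]
        · intro m' hm'
          have h1 : m' ≠ j := by
            intro h
            have := hm'.2.2.1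
            rw [h, hU] at this
            exact absurd this (by decide)
          have h2 : m' ≠ m := by
            intro h
            subst h
            exact hk (matching_unique_left hm' hmm)
          rw [hwts, Function.update_of_ne h2, Function.update_of_ne h1]

lemma WPath.ext' {μ ν : WPath n} (h1 : μ.step = ν.step) (h2 : μ.wt = ν.wt) :
    μ = ν := by
  cases μ; cases ν; simp_all

lemma ht_nonneg {μ : WPath n} (hH : Hcond μ) (j : Fin n) : 0 ≤ ht μ (j : ℕ) :=
  hH.1.1 j (le_of_lt j.isLt)

/-- Structure of the weights of a matching pair under `Hcond`. -/
lemma pair_wt {μ : WPath n} (hH : Hcond μ) {j m : Fin n} (hm : Matching μ j m) :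
    0 ≤ ht μ (j : ℕ) ∧ ht μ (m : ℕ) = ht μ (j : ℕ) + 1 ∧
    (((μ.wt j).1 = 2 ∧ (μ.wt j).2.1 = 0 ∧ ((μ.wt j).2.2 : ℤ) ≤ ht μ (j : ℕ) + 1) ∨
      ((μ.wt j).1 = 1 ∧ (μ.wt j).2.1 = 1 ∧ ht μ (j : ℕ) + 1 ≤ ((μ.wt j).2.2 : ℤ) ∧
        ((μ.wt j).2.2 : ℤ) ≤ 2 * ht μ (j : ℕ) + 2)) ∧
    (((μ.wt m).1 = 0 ∧ (μ.wt m).2.1 = 0 ∧ ((μ.wt m).2.2 : ℤ) ≤ ht μ (j : ℕ)) ∨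
      ((μ.wt m).1 = 1 ∧ (μ.wt m).2.1 = 1 ∧ ht μ (j : ℕ) + 1 ≤ ((μ.wt m).2.2 : ℤ) ∧
        ((μ.wt m).2.2 : ℤ) ≤ 2 * ht μ (j : ℕ) + 1)) := by
  obtain ⟨hlt, hU, hD, hh, _⟩ := hm
  refine ⟨ht_nonneg hH j, hh, ?_, ?_⟩
  · rcases (hH.2 j).1 hU with ⟨h1, h2, h3, h4⟩ | ⟨h1, h2, h3, h4⟩
    · exact Or.inl ⟨h1, h2, h4⟩
    · exact Or.inr ⟨h1, h2, h3, h4⟩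
  · rcases (hH.2 m).2.2.2 hD with ⟨h1, h2, h3, h4⟩ | ⟨h1, h2, h3, h4⟩
    · exact Or.inl ⟨h1, h2, by omega⟩
    · exact Or.inr ⟨h1, h2, by omega, by omega⟩

lemma toggle_toggle {μ : WPath n} (hH : Hcond μ) {j : Fin n} (hj : j ∈ Vset μ) :
    toggle (toggle μ j) j = μ := by
  set ν := toggle μ j with hν
  rcases mem_Vset.mp hj with ⟨hL, hw⟩ | ⟨hW, hw⟩ | ⟨hU, m0, hm0, hmix0⟩
  · obtain ⟨hs, hwts⟩ := toggle_of_L hL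
    have hsW : ν.step j = MStep.W := by rw [hs]; simp
    obtain ⟨hs2, hwts2⟩ := toggle_of_W hsW
    refine WPath.ext' ?_ ?_
    · rw [hs2, hs, Function.update_idem]
      conv_rhs => rw [← Function.update_eq_self j μ.step]
      rw [hL]
    · rw [hwts2, hwts, Function.update_idem, Function.update_self]
      have : ((0 : ℕ), ((2 : ℕ), (μ.wt j).2).2) = μ.wt j := by
        rw [Prod.ext_iff]; exact ⟨hw.symm, rfl⟩
      rw [this, Function.update_eq_self]
  · obtain ⟨hs, hwts⟩ := toggle_of_W hW
    have hsL : ν.step j = MStep.L := by rw [hs]; simp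
    obtain ⟨hs2, hwts2⟩ := toggle_of_L hsL
    refine WPath.ext' ?_ ?_
    · rw [hs2, hs, Function.update_idem]
      conv_rhs => rw [← Function.update_eq_self j μ.step]
      rw [hW]
    · rw [hwts2, hwts, Function.update_idem, Function.update_self]
      have : ((2 : ℕ), ((0 : ℕ), (μ.wt j).2).2) = μ.wt j := by
        rw [Prod.ext_iff]; exact ⟨hw.symm, rfl⟩
      rw [this, Function.update_eq_self]
  · obtain ⟨hpm, hmm⟩ := partner_matching hm0
    set m := partner μ j with hmdef
    have hmix : ((μ.wt j).1 = 2 ∧ (μ.wt m).1 = 1) ∨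
        ((μ.wt j).1 = 1 ∧ (μ.wt m).1 = 0) := by rw [hpm]; exact hmix0
    obtain ⟨hs, hwts⟩ := toggle_of_U hU
    have hjm : j ≠ m := by
      intro h
      have := hmm.1
      rw [← h] at this
      exact lt_irrefl _ this
    have hsU : ν.step j = MStep.U := by rw [hs]; exact hU
    obtain ⟨hs2, hwts2⟩ := toggle_of_U hsU
    have hmν : Matching ν j m := (toggle_matching j j m).2 hmm
    have hpν : partner ν j = m := (partner_matching hmν).1
    have hHt : ht ν (j : ℕ) = ht μ (j : ℕ) := toggle_ht j j
    have hwj : ν.wt j =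
        (if (μ.wt j).1 = 2 then (1, 1, (ht μ (j : ℕ)).toNat + 1 + (μ.wt j).2.2)
         else (2, 0, (μ.wt j).2.2 - ((ht μ (j : ℕ)).toNat + 1))) := by
      rw [hwts, Function.update_of_ne hjm, Function.update_self]
    have hwm : ν.wt m =
        (if (μ.wt m).1 = 1 then (0, 0, (μ.wt m).2.2 - ((ht μ (j : ℕ)).toNat + 1))
         else (1, 1, (ht μ (j : ℕ)).toNat + 1 + (μ.wt m).2.2)) := by
      rw [hwts, Function.update_self]
    obtain ⟨hpos, hhm, hwtj, hwtm⟩ := pair_wt hH hmm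
    set H : ℕ := (ht μ (j : ℕ)).toNat with hHdef
    have hHz : (H : ℤ) = ht μ (j : ℕ) := Int.toNat_of_nonneg hpos
    refine WPath.ext' (by rw [hs2, hs]) ?_
    rw [hwts2, hpν, hHt]
    rcases hmix with ⟨h2, h1⟩ | ⟨h1, h0⟩
    · -- pair of type (y², yt); the toggled pair has type (yt, q)
      have hwj' : ν.wt j = (1, 1, H + 1 + (μ.wt j).2.2) := by rw [hwj, if_pos h2]
      have hwm' : ν.wt m = (0, 0, (μ.wt m).2.2 - (H + 1)) := by rw [hwm, if_pos h1]
      rcases hwtj with ⟨e1, e2, e3⟩ | ⟨e1, _, _, _⟩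
      swap
      · omega
      rcases hwtm with ⟨f1, _, _⟩ | ⟨f1, f2, f3, f4⟩
      · omega
      funext k
      by_cases hkj : k = j
      · subst hkj
        rw [Function.update_of_ne hjm, Function.update_self, hwj']
        norm_num
        rw [Prod.ext_iff, Prod.ext_iff]
        exact ⟨h2.symm, e2.symm, by simp only; omega⟩
      · by_cases hkm : k = m
        · subst hkm
          rw [Function.update_self, hwm']
          norm_num
          rw [Prod.ext_iff, Prod.ext_iff]
          refine ⟨f1.symm, f2.symm, ?_⟩
          simp only
          omega
        · rw [Function.update_of_ne hkm, Function.update_of_ne hkj, hwts,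
            Function.update_of_ne hkm, Function.update_of_ne hkj]
    · -- pair of type (yt, q); the toggled pair has type (y², yt)
      have hwj' : ν.wt j = (2, 0, (μ.wt j).2.2 - (H + 1)) := by
        rw [hwj, if_neg (by omega)]
      have hwm' : ν.wt m = (1, 1, H + 1 + (μ.wt m).2.2) := by
        rw [hwm, if_neg (by omega)]
      rcases hwtj with ⟨e1, _, _⟩ | ⟨e1, e2, e3, e4⟩
      · omega
      rcases hwtm with ⟨f1, f2, f3⟩ | ⟨f1, _, _, _⟩
      swap
      · omega
      funext k
      by_cases hkj : k = j
      · subst hkj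
        rw [Function.update_of_ne hjm, Function.update_self, hwj']
        norm_num
        rw [Prod.ext_iff, Prod.ext_iff]
        refine ⟨e1.symm, e2.symm, ?_⟩
        simp only
        omega
      · by_cases hkm : k = m
        · subst hkm
          rw [Function.update_self, hwm']
          norm_num
          rw [Prod.ext_iff, Prod.ext_iff]
          exact ⟨f1.symm, f2.symm, by simp only; omega⟩
        · rw [Function.update_of_ne hkm, Function.update_of_ne hkj, hwts,
            Function.update_of_ne hkm, Function.update_of_ne hkj]

lemma Hcond_toggle {μ : WPath n} (hH : Hcond μ) {j : Fin n} (hj : j ∈ Vset μ) :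
    Hcond (toggle μ j) := by
  set ν := toggle μ j with hν
  have hht : ∀ p, ht ν p = ht μ p := toggle_ht j
  refine ⟨⟨fun p hp => by rw [hht]; exact hH.1.1 p hp, by rw [hht]; exact hH.1.2⟩, ?_⟩
  have transfer : ∀ k : Fin n, ν.step k = μ.step k → ν.wt k = μ.wt k →
      ((ν.step k = MStep.U →
        wY2 (ν.wt k) 0 (ht ν ↑k + 1) ∨ wYT (ν.wt k) (ht ν ↑k + 1) (2 * ht ν ↑k + 2)) ∧
      (ν.step k = MStep.L →
        wQ (ν.wt k) 0 (ht ν ↑k) ∨ wYT (ν.wt k) (ht ν ↑k + 1) (2 * ht ν ↑k + 1)) ∧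
      (ν.step k = MStep.W →
        wY2 (ν.wt k) 0 (ht ν ↑k) ∨ wYT (ν.wt k) (ht ν ↑k) (2 * ht ν ↑k)) ∧
      (ν.step k = MStep.D →
        wQ (ν.wt k) 0 (ht ν ↑k - 1) ∨ wYT (ν.wt k) (ht ν ↑k) (2 * ht ν ↑k - 1))) := by
    intro k hs hw
    simp only [hht, hs, hw]
    exact hH.2 k
  intro k
  rcases mem_Vset.mp hj with ⟨hL, hw0⟩ | ⟨hW, hw0⟩ | ⟨hU, m0, hm0, hmix0⟩
  · obtain ⟨hs, hwts⟩ := toggle_of_L hL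
    by_cases hk : k = j
    · rw [hk]
      have hsj : ν.step j = MStep.W := by rw [hs, Function.update_self]
      have hwj : ν.wt j = (2, (μ.wt j).2) := by rw [hwts, Function.update_self]
      have hold : wQ (μ.wt j) 0 (ht μ ↑j) := by
        rcases (hH.2 j).2.1 hL with h | h
        · exact h
        · exact absurd h.1 (by omega)
      obtain ⟨q1, q2, q3, q4⟩ := hold
      refine ⟨?_, ?_, ?_, ?_⟩ <;> intro h' <;> rw [hsj] at h'
      · exact absurd h' (by decide)
      · exact absurd h' (by decide)
      · left
        rw [hwj, hht]
        exact ⟨rfl, q2, q3, q4⟩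
      · exact absurd h' (by decide)
    · exact transfer k (by rw [hs, Function.update_of_ne hk])
        (by rw [hwts, Function.update_of_ne hk])
  · obtain ⟨hs, hwts⟩ := toggle_of_W hW
    by_cases hk : k = j
    · rw [hk]
      have hsj : ν.step j = MStep.L := by rw [hs, Function.update_self]
      have hwj : ν.wt j = (0, (μ.wt j).2) := by rw [hwts, Function.update_self]
      have hold : wY2 (μ.wt j) 0 (ht μ ↑j) := by
        rcases (hH.2 j).2.2.1 hW with h | h
        · exact h
        · exact absurd h.1 (by omega)
      obtain ⟨q1, q2, q3, q4⟩ := hold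
      refine ⟨?_, ?_, ?_, ?_⟩ <;> intro h' <;> rw [hsj] at h'
      · exact absurd h' (by decide)
      · left
        rw [hwj, hht]
        exact ⟨rfl, q2, q3, q4⟩
      · exact absurd h' (by decide)
      · exact absurd h' (by decide)
    · exact transfer k (by rw [hs, Function.update_of_ne hk])
        (by rw [hwts, Function.update_of_ne hk])
  · obtain ⟨hpm, hmm⟩ := partner_matching hm0
    set m := partner μ j with hmdef
    have hmix : ((μ.wt j).1 = 2 ∧ (μ.wt m).1 = 1) ∨
        ((μ.wt j).1 = 1 ∧ (μ.wt m).1 = 0) := by rw [hpm]; exact hmix0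
    obtain ⟨hs, hwts⟩ := toggle_of_U hU
    have hjm : j ≠ m := by
      intro h
      have := hmm.1
      rw [← h] at this
      exact lt_irrefl _ this
    obtain ⟨hpos, hhm, hwtj, hwtm⟩ := pair_wt hH hmm
    set H : ℕ := (ht μ (j : ℕ)).toNat with hHdef
    have hHz : (H : ℤ) = ht μ (j : ℕ) := Int.toNat_of_nonneg hpos
    have hwj : ν.wt j =
        (if (μ.wt j).1 = 2 then (1, 1, H + 1 + (μ.wt j).2.2)
         else (2, 0, (μ.wt j).2.2 - (H + 1))) := by
      rw [hwts, Function.update_of_ne hjm, Function.update_self]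
    have hwm : ν.wt m =
        (if (μ.wt m).1 = 1 then (0, 0, (μ.wt m).2.2 - (H + 1))
         else (1, 1, H + 1 + (μ.wt m).2.2)) := by
      rw [hwts, Function.update_self]
    have hD : μ.step m = MStep.D := hmm.2.2.1
    by_cases hk : k = j
    · rw [hk]
      have hsj : ν.step j = MStep.U := by rw [hs]; exact hU
      refine ⟨?_, ?_, ?_, ?_⟩ <;> intro h' <;> rw [hsj] at h'
      · rw [hht]
        rcases hmix with ⟨h2, h1⟩ | ⟨h1, h0⟩
        · have hwj' : ν.wt j = (1, 1, H + 1 + (μ.wt j).2.2) := by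
            rw [hwj, if_pos h2]
          rcases hwtj with ⟨e1, e2, e3⟩ | ⟨e1, _, _, _⟩
          · right
            rw [hwj']
            simp only [wYT]
            refine ⟨trivial, trivial, by omega, by omega⟩
          · omega
        · have hwj' : ν.wt j = (2, 0, (μ.wt j).2.2 - (H + 1)) := by
            rw [hwj, if_neg (by omega)]
          rcases hwtj with ⟨e1, _, _⟩ | ⟨e1, e2, e3, e4⟩
          · omega
          · left
            rw [hwj']
            simp only [wY2]
            refine ⟨trivial, trivial, by omega, by omega⟩
      · exact absurd h' (by decide)
      · exact absurd h' (by decide)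
      · exact absurd h' (by decide)
    · by_cases hkm : k = m
      · rw [hkm]
        have hsm : ν.step m = MStep.D := by rw [hs]; exact hD
        refine ⟨?_, ?_, ?_, ?_⟩ <;> intro h' <;> rw [hsm] at h'
        · exact absurd h' (by decide)
        · exact absurd h' (by decide)
        · exact absurd h' (by decide)
        · rw [hht, hhm]
          rcases hmix with ⟨h2, h1⟩ | ⟨h1, h0⟩
          · have hwm' : ν.wt m = (0, 0, (μ.wt m).2.2 - (H + 1)) := by
              rw [hwm, if_pos h1]
            rcases hwtm with ⟨f1, _, _⟩ | ⟨f1, f2, f3, f4⟩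
            · omega
            · left
              rw [hwm']
              simp only [wQ]
              refine ⟨trivial, trivial, by omega, by omega⟩
          · have hwm' : ν.wt m = (1, 1, H + 1 + (μ.wt m).2.2) := by
              rw [hwm, if_neg (by omega)]
            rcases hwtm with ⟨f1, f2, f3⟩ | ⟨f1, _, _, _⟩
            · right
              rw [hwm']
              simp only [wYT]
              refine ⟨trivial, trivial, by omega, by omega⟩
            · omega
      · exact transfer k (by rw [hs]) (by
          rw [hwts, Function.update_of_ne hkm, Function.update_of_ne hk])

lemma rho_split_one (μ : WPath n) (j : Fin n) :
    rho μ = (yv ^ (μ.wt j).1 * tv ^ (μ.wt j).2.1 * qv ^ (μ.wt j).2.2) *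
      ∏ k ∈ Finset.univ.erase j,
        yv ^ (μ.wt k).1 * tv ^ (μ.wt k).2.1 * qv ^ (μ.wt k).2.2 := by
  rw [rho, ← Finset.mul_prod_erase _ _ (Finset.mem_univ j)]

lemma rho_split_two (μ : WPath n) {j m : Fin n} (h : j ≠ m) :
    rho μ = (yv ^ (μ.wt j).1 * tv ^ (μ.wt j).2.1 * qv ^ (μ.wt j).2.2) *
      (yv ^ (μ.wt m).1 * tv ^ (μ.wt m).2.1 * qv ^ (μ.wt m).2.2) *
      ∏ k ∈ (Finset.univ.erase j).erase m,
        yv ^ (μ.wt k).1 * tv ^ (μ.wt k).2.1 * qv ^ (μ.wt k).2.2 := by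
  rw [rho, ← Finset.mul_prod_erase _ _ (Finset.mem_univ j),
    ← Finset.mul_prod_erase _ _ (Finset.mem_erase.mpr ⟨Ne.symm h, Finset.mem_univ m⟩),
    ← mul_assoc]

lemma tExp_split_two (μ : WPath n) {j m : Fin n} (h : j ≠ m) :
    tExp μ = (μ.wt j).2.1 + (μ.wt m).2.1 +
      ∑ k ∈ (Finset.univ.erase j).erase m, (μ.wt k).2.1 := by
  rw [tExp, ← Finset.add_sum_erase _ _ (Finset.mem_univ j),
    ← Finset.add_sum_erase _ _ (Finset.mem_erase.mpr ⟨Ne.symm h, Finset.mem_univ m⟩),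
    ← add_assoc]

lemma rho_toggle {μ : WPath n} (hH : Hcond μ) {j : Fin n} (hj : j ∈ Vset μ) :
    rho (toggle μ j) = yv ^ 2 * rho μ ∨ yv ^ 2 * rho (toggle μ j) = rho μ := by
  set ν := toggle μ j with hν
  rcases mem_Vset.mp hj with ⟨hL, hw0⟩ | ⟨hW, hw0⟩ | ⟨hU, m0, hm0, hmix0⟩
  · left
    obtain ⟨hs, hwts⟩ := toggle_of_L hL
    have hwj : ν.wt j = (2, (μ.wt j).2) := by rw [hwts, Function.update_self]
    rw [rho_split_one ν j, rho_split_one μ j, hwj, hw0]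
    have hrest : ∀ k ∈ Finset.univ.erase j,
        yv ^ (ν.wt k).1 * tv ^ (ν.wt k).2.1 * qv ^ (ν.wt k).2.2 =
        yv ^ (μ.wt k).1 * tv ^ (μ.wt k).2.1 * qv ^ (μ.wt k).2.2 := by
      intro k hk
      rw [hwts, Function.update_of_ne (Finset.mem_erase.mp hk).1]
    rw [Finset.prod_congr rfl hrest]
    ring
  · right
    obtain ⟨hs, hwts⟩ := toggle_of_W hW
    have hwj : ν.wt j = (0, (μ.wt j).2) := by rw [hwts, Function.update_self]
    rw [rho_split_one ν j, rho_split_one μ j, hwj, hw0]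
    have hrest : ∀ k ∈ Finset.univ.erase j,
        yv ^ (ν.wt k).1 * tv ^ (ν.wt k).2.1 * qv ^ (ν.wt k).2.2 =
        yv ^ (μ.wt k).1 * tv ^ (μ.wt k).2.1 * qv ^ (μ.wt k).2.2 := by
      intro k hk
      rw [hwts, Function.update_of_ne (Finset.mem_erase.mp hk).1]
    rw [Finset.prod_congr rfl hrest]
    ring
  · obtain ⟨hpm, hmm⟩ := partner_matching hm0
    set m := partner μ j with hmdef
    have hmix : ((μ.wt j).1 = 2 ∧ (μ.wt m).1 = 1) ∨
        ((μ.wt j).1 = 1 ∧ (μ.wt m).1 = 0) := by rw [hpm]; exact hmix0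
    obtain ⟨hs, hwts⟩ := toggle_of_U hU
    have hjm : j ≠ m := by
      intro h
      have := hmm.1
      rw [← h] at this
      exact lt_irrefl _ this
    obtain ⟨hpos, hhm, hwtj, hwtm⟩ := pair_wt hH hmm
    set H : ℕ := (ht μ (j : ℕ)).toNat with hHdef
    have hHz : (H : ℤ) = ht μ (j : ℕ) := Int.toNat_of_nonneg hpos
    have hwj : ν.wt j =
        (if (μ.wt j).1 = 2 then (1, 1, H + 1 + (μ.wt j).2.2)
         else (2, 0, (μ.wt j).2.2 - (H + 1))) := by
      rw [hwts, Function.update_of_ne hjm, Function.update_self]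
    have hwm : ν.wt m =
        (if (μ.wt m).1 = 1 then (0, 0, (μ.wt m).2.2 - (H + 1))
         else (1, 1, H + 1 + (μ.wt m).2.2)) := by
      rw [hwts, Function.update_self]
    have hrest : ∀ k ∈ (Finset.univ.erase j).erase m,
        yv ^ (ν.wt k).1 * tv ^ (ν.wt k).2.1 * qv ^ (ν.wt k).2.2 =
        yv ^ (μ.wt k).1 * tv ^ (μ.wt k).2.1 * qv ^ (μ.wt k).2.2 := by
      intro k hk
      obtain ⟨hkm, hkj'⟩ := Finset.mem_erase.mp hk
      rw [hwts, Function.update_of_ne hkm,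
        Function.update_of_ne (Finset.mem_erase.mp hkj').1]
    rcases hmix with ⟨h2, h1⟩ | ⟨h1, h0⟩
    · right
      rcases hwtj with ⟨e1, e2, e3⟩ | ⟨e1, _, _, _⟩
      swap
      · omega
      rcases hwtm with ⟨f1, _, _⟩ | ⟨f1, f2, f3, f4⟩
      · omega
      have hwj' : ν.wt j = (1, 1, H + 1 + (μ.wt j).2.2) := by rw [hwj, if_pos h2]
      have hwm' : ν.wt m = (0, 0, (μ.wt m).2.2 - (H + 1)) := by rw [hwm, if_pos h1]
      obtain ⟨d, hd⟩ : ∃ d, (μ.wt m).2.2 = H + 1 + d :=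
        ⟨(μ.wt m).2.2 - (H + 1), by omega⟩
      rw [rho_split_two ν hjm, rho_split_two μ hjm, Finset.prod_congr rfl hrest,
        hwj', hwm', e1, e2, f1, f2, hd]
      have : H + 1 + d - (H + 1) = d := by omega
      rw [this]
      ring
    · left
      rcases hwtj with ⟨e1, _, _⟩ | ⟨e1, e2, e3, e4⟩
      · omega
      rcases hwtm with ⟨f1, f2, f3⟩ | ⟨f1, _, _, _⟩
      swap
      · omega
      have hwj' : ν.wt j = (2, 0, (μ.wt j).2.2 - (H + 1)) := by
        rw [hwj, if_neg (by omega)]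
      have hwm' : ν.wt m = (1, 1, H + 1 + (μ.wt m).2.2) := by
        rw [hwm, if_neg (by omega)]
      obtain ⟨d, hd⟩ : ∃ d, (μ.wt j).2.2 = H + 1 + d :=
        ⟨(μ.wt j).2.2 - (H + 1), by omega⟩
      rw [rho_split_two ν hjm, rho_split_two μ hjm, Finset.prod_congr rfl hrest,
        hwj', hwm', e1, e2, f1, f2, hd]
      have : H + 1 + d - (H + 1) = d := by omega
      rw [this]
      ring

lemma tExp_toggle {μ : WPath n} (hH : Hcond μ) {j : Fin n} (hj : j ∈ Vset μ) :
    tExp (toggle μ j) = tExp μ := by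
  set ν := toggle μ j with hν
  rcases mem_Vset.mp hj with ⟨hL, hw0⟩ | ⟨hW, hw0⟩ | ⟨hU, m0, hm0, hmix0⟩
  · obtain ⟨hs, hwts⟩ := toggle_of_L hL
    refine Finset.sum_congr rfl fun k _ => ?_
    by_cases hk : k = j
    · rw [hk, hwts, Function.update_self]
    · rw [hwts, Function.update_of_ne hk]
  · obtain ⟨hs, hwts⟩ := toggle_of_W hW
    refine Finset.sum_congr rfl fun k _ => ?_
    by_cases hk : k = j
    · rw [hk, hwts, Function.update_self]
    · rw [hwts, Function.update_of_ne hk]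
  · obtain ⟨hpm, hmm⟩ := partner_matching hm0
    set m := partner μ j with hmdef
    have hmix : ((μ.wt j).1 = 2 ∧ (μ.wt m).1 = 1) ∨
        ((μ.wt j).1 = 1 ∧ (μ.wt m).1 = 0) := by rw [hpm]; exact hmix0
    obtain ⟨hs, hwts⟩ := toggle_of_U hU
    have hjm : j ≠ m := by
      intro h
      have := hmm.1
      rw [← h] at this
      exact lt_irrefl _ this
    have hwj : ν.wt j =
        (if (μ.wt j).1 = 2 then (1, 1, (ht μ (j : ℕ)).toNat + 1 + (μ.wt j).2.2)
         else (2, 0, (μ.wt j).2.2 - ((ht μ (j : ℕ)).toNat + 1))) := by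
      rw [hwts, Function.update_of_ne hjm, Function.update_self]
    have hwm : ν.wt m =
        (if (μ.wt m).1 = 1 then (0, 0, (μ.wt m).2.2 - ((ht μ (j : ℕ)).toNat + 1))
         else (1, 1, (ht μ (j : ℕ)).toNat + 1 + (μ.wt m).2.2)) := by
      rw [hwts, Function.update_self]
    have hrest : ∀ k ∈ (Finset.univ.erase j).erase m, (ν.wt k).2.1 = (μ.wt k).2.1 := by
      intro k hk
      obtain ⟨hkm, hkj'⟩ := Finset.mem_erase.mp hk
      rw [hwts, Function.update_of_ne hkm,
        Function.update_of_ne (Finset.mem_erase.mp hkj').1]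
    obtain ⟨hpos, hhm, hwtj, hwtm⟩ := pair_wt hH hmm
    rw [tExp_split_two ν hjm, tExp_split_two μ hjm, Finset.sum_congr rfl hrest]
    congr 1
    rcases hmix with ⟨h2, h1⟩ | ⟨h1, h0⟩
    · rw [hwj, hwm, if_pos h2, if_pos h1]
      simp only
      omega
    · rw [hwj, hwm, if_neg (by omega), if_neg (by omega)]
      simp only
      omega

lemma Fextra_iff_Vempty {μ : WPath n} (hH : Hcond μ) :
    FextraCond μ ↔ Vset μ = ∅ := by
  constructor
  · intro hF
    rw [Finset.eq_empty_iff_forall_notMem]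
    intro j hj
    rcases mem_Vset.mp hj with ⟨hL, h0⟩ | ⟨hW, h2⟩ | ⟨hU, m, hm, hmix⟩
    · have := (hF.2.1 j hL).1
      omega
    · have := (hF.2.2 j hW).1
      omega
    · rcases hF.1 j m hm with ⟨h1, h2⟩ | ⟨h1, h2⟩
      · have a1 := h1.1
        have a2 := h2.1
        omega
      · have a1 := h1.1
        have a2 := h2.1
        omega
  · intro hV
    refine ⟨?_, ?_, ?_⟩
    · intro i m hm
      have hnot : i ∉ Vset μ := by rw [hV]; exact Finset.notMem_empty i
      rw [mem_Vset] at hnot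
      push_neg at hnot
      have hnm := hnot.2.2 hm.2.1 m hm
      obtain ⟨hpos, hhm, hwtj, hwtm⟩ := pair_wt hH hm
      rcases hwtj with ⟨e1, e2, e3⟩ | ⟨e1, e2, e3, e4⟩ <;>
        rcases hwtm with ⟨f1, f2, f3⟩ | ⟨f1, f2, f3, f4⟩
      · exact Or.inl ⟨⟨e1, e2, by omega, e3⟩, ⟨f1, f2, by omega, f3⟩⟩
      · exact absurd f1 (hnm.1 e1)
      · exact absurd f1 (hnm.2 e1)
      · exact Or.inr ⟨⟨e1, e2, e3, e4⟩, ⟨f1, f2, f3, f4⟩⟩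
    · intro k hk
      have hnot : k ∉ Vset μ := by rw [hV]; exact Finset.notMem_empty k
      rw [mem_Vset] at hnot
      push_neg at hnot
      rcases (hH.2 k).2.1 hk with h | h
      · exact absurd h.1 (hnot.1 hk)
      · exact h
    · intro k hk
      have hnot : k ∉ Vset μ := by rw [hV]; exact Finset.notMem_empty k
      rw [mem_Vset] at hnot
      push_neg at hnot
      rcases (hH.2 k).2.2.1 hk with h | h
      · exact absurd h.1 (hnot.2.1 hk)
      · exact h

lemma toggle_ne {μ : WPath n} {j : Fin n} (hj : j ∈ Vset μ) :
    toggle μ j ≠ μ := by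
  intro h
  have hwt := congrFun (congrArg WPath.wt h) j
  rcases mem_Vset.mp hj with ⟨hL, hw0⟩ | ⟨hW, hw0⟩ | ⟨hU, m0, hm0, hmix0⟩
  · rw [(toggle_of_L hL).2, Function.update_self] at hwt
    have : ((2 : ℕ), (μ.wt j).2).1 = (μ.wt j).1 := by rw [hwt]
    simp only at this
    omega
  · rw [(toggle_of_W hW).2, Function.update_self] at hwt
    have : ((0 : ℕ), (μ.wt j).2).1 = (μ.wt j).1 := by rw [hwt]
    simp only at this
    omega
  · obtain ⟨hpm, hmm⟩ := partner_matching hm0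
    set m := partner μ j with hmdef
    have hmix : ((μ.wt j).1 = 2 ∧ (μ.wt m).1 = 1) ∨
        ((μ.wt j).1 = 1 ∧ (μ.wt m).1 = 0) := by rw [hpm]; exact hmix0
    have hjm : j ≠ m := by
      intro h'
      have := hmm.1
      rw [← h'] at this
      exact lt_irrefl _ this
    rw [(toggle_of_U hU).2, Function.update_of_ne hjm, Function.update_self] at hwt
    rcases hmix with ⟨h2, _⟩ | ⟨h1, _⟩
    · rw [if_pos h2] at hwt
      have : ((1 : ℕ), (1 : ℕ), (ht μ (j : ℕ)).toNat + 1 + (μ.wt j).2.2).1 =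
          (μ.wt j).1 := by rw [hwt]
      simp only at this
      omega
    · rw [if_neg (by omega)] at hwt
      have : ((2 : ℕ), (0 : ℕ), (μ.wt j).2.2 - ((ht μ (j : ℕ)).toNat + 1)).1 =
          (μ.wt j).1 := by rw [hwt]
      simp only at this
      omega

/-- The involution `Ψ`: toggle the first violation, if any. -/
noncomputable def Psi (μ : WPath n) : WPath n :=
  if h : (Vset μ).Nonempty then toggle μ ((Vset μ).min' h) else μ

lemma Psi_of_empty {μ : WPath n} (h : Vset μ = ∅) : Psi μ = μ := by
  rw [Psi, dif_neg]
  rw [h]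
  exact fun h' => absurd h' Finset.not_nonempty_empty

lemma Psi_of_nonempty {μ : WPath n} (h : (Vset μ).Nonempty) :
    Psi μ = toggle μ ((Vset μ).min' h) := dif_pos h

end Aux

/-- Proposition 3.6 (with Lemma 3.7): there is an involution `Ψ` of `H_n` whose
fixed points are exactly the paths of `F_n`, which changes the weight of a
non-fixed path by a factor `y^2` or `y^{-2}`, and which preserves the exponent of
`t` of the weight. -/
theorem statement14 (n : ℕ) :
    ∃ Ψ : WPath n → WPath n,
      (∀ μ : WPath n, Hcond μ → Hcond (Ψ μ)) ∧
      (∀ μ : WPath n, Hcond μ → Ψ (Ψ μ) = μ) ∧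
      (∀ μ : WPath n, Hcond μ → (Ψ μ = μ ↔ FextraCond μ)) ∧
      (∀ μ : WPath n, Hcond μ → ¬ FextraCond μ →
        rho (Ψ μ) = yv ^ 2 * rho μ ∨ yv ^ 2 * rho (Ψ μ) = rho μ) ∧
      (∀ μ : WPath n, Hcond μ → tExp (Ψ μ) = tExp μ) := by
  refine ⟨Psi, ?_, ?_, ?_, ?_, ?_⟩
  · intro μ hH
    by_cases h : (Vset μ).Nonempty
    · rw [Psi_of_nonempty h]
      exact Hcond_toggle hH (Finset.min'_mem _ h)
    · rw [Psi_of_empty (Finset.not_nonempty_iff_eq_empty.mp h)]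
      exact hH
  · intro μ hH
    by_cases h : (Vset μ).Nonempty
    · rw [Psi_of_nonempty h]
      have hj : (Vset μ).min' h ∈ Vset μ := Finset.min'_mem _ h
      have hVeq : Vset (toggle μ ((Vset μ).min' h)) = Vset μ := Vset_toggle hj
      have h2 : (Vset (toggle μ ((Vset μ).min' h))).Nonempty := by rw [hVeq]; exact h
      rw [Psi_of_nonempty h2]
      have : (Vset (toggle μ ((Vset μ).min' h))).min' h2 = (Vset μ).min' h := by
        congr 1
      rw [this]
      exact toggle_toggle hH hj
    · have he := Finset.not_nonempty_iff_eq_empty.mp h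
      rw [Psi_of_empty he, Psi_of_empty he]
  · intro μ hH
    constructor
    · intro hfix
      by_contra hF
      have hne : Vset μ ≠ ∅ := fun he => hF ((Fextra_iff_Vempty hH).mpr he)
      have h : (Vset μ).Nonempty := Finset.nonempty_iff_ne_empty.mpr hne
      rw [Psi_of_nonempty h] at hfix
      exact toggle_ne (Finset.min'_mem _ h) hfix
    · intro hF
      exact Psi_of_empty ((Fextra_iff_Vempty hH).mp hF)
  · intro μ hH hF
    have hne : Vset μ ≠ ∅ := fun he => hF ((Fextra_iff_Vempty hH).mpr he)
    have h : (Vset μ).Nonempty := Finset.nonempty_iff_ne_empty.mpr hne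
    rw [Psi_of_nonempty h]
    exact rho_toggle hH (Finset.min'_mem _ h)
  · intro μ hH
    by_cases h : (Vset μ).Nonempty
    · rw [Psi_of_nonempty h]
      exact tExp_toggle hH (Finset.min'_mem _ h)
    · rw [Psi_of_empty (Finset.not_nonempty_iff_eq_empty.mp h)]
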